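/- Let n ≥ 2, λ > -n/2, μ a finite positive Borel measure on S^{n-1}, and u the P_λ-Poisson integral of μ. Then for every unit vector ζ, the function r ↦ ((1+r)^(n-1)/(1-r)^(1+2λ)) · u(rζ) is monotone increasing on [0,1). -/

import Mathlib

open MeasureTheory Real

theorem stmt9 (n : ℕ) (hn : 2 ≤ n) (l : ℝ) (hl : -(n / 2 : ℝ) < l)
    (μ : MeasureTheory.Measure (Metric.sphere (0 : EuclideanSpace ℝ (Fin n)) 1))
    [MeasureTheory.IsFiniteMeasure μ]
    (u : EuclideanSpace ℝ (Fin n) → ℝ)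
    (hu : ∀ x, ‖x‖ < 1 →
      u x = ∫ ξ, (1 - ‖x‖ ^ 2) ^ (1 + 2 * l) / ‖x - (ξ : EuclideanSpace ℝ (Fin n))‖ ^ ((n : ℝ) + 2 * l) ∂μ)
    (ζ : EuclideanSpace ℝ (Fin n)) (hζ : ‖ζ‖ = 1) :
    MonotoneOn (fun r : ℝ => (1 + r) ^ ((n : ℝ) - 1) / (1 - r) ^ (1 + 2 * l) * u (r • ζ))
      (Set.Ico (0:ℝ) 1) := by
  set p : ℝ := (n : ℝ) + 2 * l with hp_def
  have hn2 : (2:ℝ) ≤ (n:ℝ) := by exact_mod_cast hn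
  have hp : 0 < p := by
    simp only [hp_def]; linarith
  have hξnorm : ∀ ξ : Metric.sphere (0 : EuclideanSpace ℝ (Fin n)) 1,
      ‖(ξ : EuclideanSpace ℝ (Fin n))‖ = 1 := by
    intro ξ
    have := ξ.2
    simpa [mem_sphere_iff_norm] using this
  have hnorm_lb : ∀ r : ℝ, 0 ≤ r → ∀ ξ : Metric.sphere (0 : EuclideanSpace ℝ (Fin n)) 1,
      1 - r ≤ ‖r • ζ - (ξ : EuclideanSpace ℝ (Fin n))‖ := by
    intro r hr ξ
    have h1 : ‖(ξ : EuclideanSpace ℝ (Fin n)) - r • ζ‖ ≥ ‖(ξ : EuclideanSpace ℝ (Fin n))‖ - ‖r • ζ‖ :=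
      norm_sub_norm_le _ _
    have h2 : ‖r • ζ‖ = r := by rw [norm_smul, hζ, Real.norm_eq_abs, abs_of_nonneg hr, mul_one]
    rw [norm_sub_rev]
    rw [hξnorm ξ, h2] at h1
    linarith
  have hnorm_pos : ∀ r ∈ Set.Ico (0:ℝ) 1, ∀ ξ : Metric.sphere (0 : EuclideanSpace ℝ (Fin n)) 1,
      0 < ‖r • ζ - (ξ : EuclideanSpace ℝ (Fin n))‖ := by
    intro r hr ξ
    have := hnorm_lb r hr.1 ξ
    linarith [hr.2]
  -- key rewrite
  have key : ∀ r ∈ Set.Ico (0:ℝ) 1,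
      (1 + r) ^ ((n : ℝ) - 1) / (1 - r) ^ (1 + 2 * l) * u (r • ζ)
      = ∫ ξ, ((1 + r) / ‖r • ζ - (ξ : EuclideanSpace ℝ (Fin n))‖) ^ p ∂μ := by
    intro r hr
    have hrn : ‖r • ζ‖ = r := by rw [norm_smul, hζ, Real.norm_eq_abs, abs_of_nonneg hr.1, mul_one]
    have hr1 : ‖r • ζ‖ < 1 := by rw [hrn]; exact hr.2
    rw [hu (r • ζ) hr1, ← integral_const_mul]
    refine integral_congr_ae (Filter.Eventually.of_forall fun ξ => ?_)
    have ha : 0 < ‖r • ζ - (ξ : EuclideanSpace ℝ (Fin n))‖ := hnorm_pos r hr ξ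
    have h1r : (0:ℝ) < 1 - r := by linarith [hr.2]
    have h1r' : (0:ℝ) < 1 + r := by linarith [hr.1]
    rw [hrn]
    dsimp only
    have h1 : (1 - r ^ 2 : ℝ) ^ (1 + 2 * l) = (1 - r) ^ (1 + 2 * l) * (1 + r) ^ (1 + 2 * l) := by
      rw [show (1 - r ^ 2 : ℝ) = (1 - r) * (1 + r) by ring,
        Real.mul_rpow h1r.le h1r'.le]
    have e1 : ((1 + r) / ‖r • ζ - (ξ : EuclideanSpace ℝ (Fin n))‖) ^ p
        = (1 + r) ^ p / ‖r • ζ - (ξ : EuclideanSpace ℝ (Fin n))‖ ^ p :=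
      Real.div_rpow h1r'.le (norm_nonneg _) p
    have e2 : (1 + r : ℝ) ^ p = (1 + r) ^ ((n : ℝ) - 1) * (1 + r) ^ (1 + 2 * l) := by
      rw [← Real.rpow_add h1r']
      congr 1
      simp only [hp_def]; ring
    have hne1 : (1 - r : ℝ) ^ (1 + 2 * l) ≠ 0 := (Real.rpow_pos_of_pos h1r _).ne'
    have hne2 : ‖r • ζ - (ξ : EuclideanSpace ℝ (Fin n))‖ ^ p ≠ 0 :=
      (Real.rpow_pos_of_pos ha _).ne'
    rw [e1, e2, h1]
    field_simp
  -- integrability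
  have hint : ∀ r ∈ Set.Ico (0:ℝ) 1,
      Integrable (fun ξ : Metric.sphere (0 : EuclideanSpace ℝ (Fin n)) 1 =>
        ((1 + r) / ‖r • ζ - (ξ : EuclideanSpace ℝ (Fin n))‖) ^ p) μ := by
    intro r hr
    have h1r : (0:ℝ) < 1 - r := by linarith [hr.2]
    have h1r' : (0:ℝ) < 1 + r := by linarith [hr.1]
    have cont : Continuous fun ξ : Metric.sphere (0 : EuclideanSpace ℝ (Fin n)) 1 =>
        ((1 + r) / ‖r • ζ - (ξ : EuclideanSpace ℝ (Fin n))‖) ^ p := by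
      apply Continuous.rpow_const
      · exact continuous_const.div
          ((continuous_const.sub continuous_subtype_val).norm)
          (fun ξ => (hnorm_pos r hr ξ).ne')
      · intro ξ; right; exact hp.le
    refine (integrable_const (((1 + r) / (1 - r)) ^ p)).mono' cont.aestronglyMeasurable ?_
    refine Filter.Eventually.of_forall fun ξ => ?_
    have ha : 0 < ‖r • ζ - (ξ : EuclideanSpace ℝ (Fin n))‖ := hnorm_pos r hr ξ
    rw [Real.norm_eq_abs, abs_of_nonneg (Real.rpow_nonneg (by positivity) _)]
    apply Real.rpow_le_rpow (by positivity) _ hp.le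
    exact div_le_div_of_nonneg_left h1r'.le h1r (hnorm_lb r hr.1 ξ)
  -- monotonicity
  intro r hr s hs hrs
  simp only
  rw [key r hr, key s hs]
  refine integral_mono (hint r hr) (hint s hs) fun ξ => ?_
  have ha : 0 < ‖r • ζ - (ξ : EuclideanSpace ℝ (Fin n))‖ := hnorm_pos r hr ξ
  have hb : 0 < ‖s • ζ - (ξ : EuclideanSpace ℝ (Fin n))‖ := hnorm_pos s hs ξ
  have h1r' : (0:ℝ) < 1 + r := by linarith [hr.1]
  have h1s' : (0:ℝ) < 1 + s := by linarith [hs.1]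
  apply Real.rpow_le_rpow (by positivity) _ hp.le
  rw [div_le_div_iff₀ ha hb]
  set t : ℝ := inner ℝ ζ (ξ : EuclideanSpace ℝ (Fin n)) with ht_def
  have ht : |t| ≤ 1 := by
    have := abs_real_inner_le_norm ζ (ξ : EuclideanSpace ℝ (Fin n))
    simpa [ht_def, hζ, hξnorm ξ] using this
  have hsq : ∀ q : ℝ, 0 ≤ q → ‖q • ζ - (ξ : EuclideanSpace ℝ (Fin n))‖ ^ 2
      = 1 - 2 * q * t + q ^ 2 := by
    intro q hq
    rw [@norm_sub_sq_real]
    rw [norm_smul, hζ, hξnorm ξ, real_inner_smul_left, ← ht_def, Real.norm_eq_abs, abs_of_nonneg hq]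
    ring
  have ha2 := hsq r hr.1
  have hb2 := hsq s hs.1
  have hsqle : ((1 + r) * ‖s • ζ - (ξ : EuclideanSpace ℝ (Fin n))‖) ^ 2
      ≤ ((1 + s) * ‖r • ζ - (ξ : EuclideanSpace ℝ (Fin n))‖) ^ 2 := by
    have key2 : (0:ℝ) ≤ 2 * (s - r) * (1 + t) * (1 - r * s) := by
      have h1 : (0:ℝ) ≤ s - r := by linarith
      have h2 : (0:ℝ) ≤ 1 + t := by cases abs_le.mp ht; linarith
      have h3 : (0:ℝ) ≤ 1 - r * s := by
        nlinarith [hr.1, hr.2, hs.1, hs.2]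
      positivity
    rw [mul_pow, mul_pow, ha2, hb2]
    nlinarith [key2]
  have := Real.sqrt_le_sqrt hsqle
  rwa [Real.sqrt_sq (by positivity), Real.sqrt_sq (by positivity)] at this
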